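/- arXiv:0805.2641 — 8 statements merged into one kernel-verified Lean document; each statement's English description precedes it below -/
import Mathlib

section
/- Let a, b, α, β be positive reals with α·β ≤ 1. Then a·b·α·(1 + β)/(α·a + b) = a·b·β·(α + 1)/(β·b + a) if and only if α·a = β·b or α·β = 1. -/
/-- For positive a, b, α, β with α·β ≤ 1,
a·b·α·(1 + β)/(α·a + b) = a·b·β·(α + 1)/(β·b + a) iff α·a = β·b or α·β = 1. -/
theorem diamond_R1_eq_R2_case2 (a b α β : ℝ)
    (ha : 0 < a) (hb : 0 < b) (hα : 0 < α) (hβ : 0 < β) (hαβ : α * β ≤ 1) :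
    a * b * α * (1 + β) / (α * a + b) = a * b * β * (α + 1) / (β * b + a) ↔
      α * a = β * b ∨ α * β = 1 := by
  have h1 : (0:ℝ) < α * a + b := by positivity
  have h2 : (0:ℝ) < β * b + a := by positivity
  rw [div_eq_div_iff h1.ne' h2.ne']
  constructor
  · intro h
    have key : a * b * ((1 - α * β) * (α * a - β * b)) = 0 := by linear_combination h
    have hab : a * b ≠ 0 := by positivity
    have := (mul_eq_zero.mp key).resolve_left hab
    rcases mul_eq_zero.mp this with h' | h'
    · right; linarith [sub_eq_zero.mp h']
    · left; exact sub_eq_zero.mp h'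
  · rintro (h | h)
    · linear_combination (a * b * (1 - α * β)) * h
    · linear_combination (-(a * b * (α * a - β * b))) * h
end

section
/- Let C01, C02, C13, C23 be positive reals and define R1 = (C01·C13 + min(C13·C23, C01·C02))/(C13 + C01) and R2 = (C02·C23 + min(C13·C23, C01·C02))/(C23 + C02). Then R1 = R2 if and only if at least one of the following holds: (i) C01·C02 = C13·C23; (ii) C01 = C02 and C01·C02 ≤ C13·C23; (iii) C13 = C23 and C01·C02 ≥ C13·C23. -/
/-- Lemma 1: R1 = R2 iff (i) C01·C02 = C13·C23, or
(ii) C01 = C02 and C01·C02 ≤ C13·C23, or (iii) C13 = C23 and C01·C02 ≥ C13·C23. -/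
theorem diamond_R1_eq_R2_characterization (C01 C02 C13 C23 : ℝ)
    (h01 : 0 < C01) (h02 : 0 < C02) (h13 : 0 < C13) (h23 : 0 < C23) :
    (C01 * C13 + min (C13 * C23) (C01 * C02)) / (C13 + C01) =
      (C02 * C23 + min (C13 * C23) (C01 * C02)) / (C23 + C02) ↔
    (C01 * C02 = C13 * C23 ∨
      (C01 = C02 ∧ C01 * C02 ≤ C13 * C23) ∨
      (C13 = C23 ∧ C13 * C23 ≤ C01 * C02)) := by
  have hp1 : (0:ℝ) < C13 + C01 := by linarith
  have hp2 : (0:ℝ) < C23 + C02 := by linarith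
  rcases le_total (C13 * C23) (C01 * C02) with h | h
  · rw [min_eq_left h, div_eq_div_iff hp1.ne' hp2.ne']
    constructor
    · intro heq
      have key : (C13 - C23) * (C01 * C02 - C13 * C23) = 0 := by linear_combination heq
      rcases mul_eq_zero.mp key with k | k
      · exact Or.inr (Or.inr ⟨by linarith, h⟩)
      · exact Or.inl (by linarith)
    · rintro (e | ⟨e1, e2⟩ | ⟨e3, _⟩)
      · linear_combination (C13 - C23) * e
      · have e : C01 * C02 = C13 * C23 := le_antisymm e2 h
        linear_combination (C13 - C23) * e
      · linear_combination (C01 * C02 - C13 * C23) * e3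
  · rw [min_eq_right h, div_eq_div_iff hp1.ne' hp2.ne']
    constructor
    · intro heq
      have key : (C01 - C02) * (C13 * C23 - C01 * C02) = 0 := by linear_combination heq
      rcases mul_eq_zero.mp key with k | k
      · exact Or.inr (Or.inl ⟨by linarith, h⟩)
      · exact Or.inl (by linarith)
    · rintro (e | ⟨e1, _⟩ | ⟨e3, e4⟩)
      · linear_combination (C02 - C01) * e
      · linear_combination (C13 * C23 - C01 * C02) * e1
      · have e : C01 * C02 = C13 * C23 := le_antisymm h e4
        linear_combination (C02 - C01) * e
end

section
/- Let a, b, α, β be positive reals with α·β = 1, and let t* = (t1*, t2*, t3*, t4*) = (0, b/(α·a + b), a/(a + β·b), 0). Then t1* + t2* + t3* + t4* = 1, and the cut rates R_C2(t*) = t1*·a + t2*·(a + α·a) + t4*·α·a and R_C3(t*) = t1*·b + t3*·(b + β·b) + t4*·β·b are both equal to a·b·(1 + α)/(α·a + b). -/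
/-- Lemma 4: At t* = (0, b/(α·a + b), a/(a + β·b), 0) with α·β = 1,
the entries sum to 1 and the cut rates of cuts 2 and 3 both equal a·b·(1 + α)/(α·a + b). -/
theorem diamond_cut_rates_at_tstar (a b α β : ℝ)
    (ha : 0 < a) (hb : 0 < b) (hα : 0 < α) (hβ : 0 < β) (hαβ : α * β = 1) :
    let t1 : ℝ := 0
    let t2 : ℝ := b / (α * a + b)
    let t3 : ℝ := a / (a + β * b)
    let t4 : ℝ := 0
    t1 + t2 + t3 + t4 = 1 ∧
    t1 * a + t2 * (a + α * a) + t4 * (α * a) = a * b * (1 + α) / (α * a + b) ∧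
    t1 * b + t3 * (b + β * b) + t4 * (β * b) = a * b * (1 + α) / (α * a + b) := by
  intro t1 t2 t3 t4
  have hαne : α ≠ 0 := ne_of_gt hα
  have hβ' : β = 1/α := by
    rw [eq_div_iff hαne]; linear_combination hαβ
  subst hβ'
  have h1 : α * a + b ≠ 0 := by positivity
  have h2 : a + 1/α * b ≠ 0 := by positivity
  refine ⟨?_, ?_, ?_⟩ <;> simp only [t1, t2, t3, t4] <;> field_simp <;> ring
end

section
/- Let a, b, α, β be positive reals with α·β = 1. For every time-sharing vector t = (t1, t2, t3, t4) with ti ≥ 0 and t1 + t2 + t3 + t4 = 1, one has min(R_C2(t), R_C3(t)) ≤ a·b·(1 + α)/(α·a + b), where R_C2(t) = t1·a + t2·(a + α·a) + t4·α·a and R_C3(t) = t1·b + t3·(b + β·b) + t4·β·b. Moreover, equality is attained at t* = (0, b/(α·a + b), a/(a + β·b), 0). -/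
/-- Lemma 3: For α·β = 1, every time-sharing vector t in the simplex
satisfies min(R_C2(t), R_C3(t)) ≤ a·b·(1 + α)/(α·a + b), with equality at
t* = (0, b/(α·a + b), a/(a + β·b), 0). -/
theorem diamond_tstar_maximizes_min_cut (a b α β : ℝ)
    (ha : 0 < a) (hb : 0 < b) (hα : 0 < α) (hβ : 0 < β) (hαβ : α * β = 1) :
    (∀ t1 t2 t3 t4 : ℝ, 0 ≤ t1 → 0 ≤ t2 → 0 ≤ t3 → 0 ≤ t4 →
      t1 + t2 + t3 + t4 = 1 →
      min (t1 * a + t2 * (a + α * a) + t4 * (α * a))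
          (t1 * b + t3 * (b + β * b) + t4 * (β * b)) ≤
        a * b * (1 + α) / (α * a + b)) ∧
    min ((0 : ℝ) * a + b / (α * a + b) * (a + α * a) + 0 * (α * a))
        ((0 : ℝ) * b + a / (a + β * b) * (b + β * b) + 0 * (β * b)) =
      a * b * (1 + α) / (α * a + b) := by
  have hD : 0 < α * a + b := by positivity
  have hD2 : 0 < a + β * b := by positivity
  constructor
  · intro t1 t2 t3 t4 h1 h2 h3 h4 hsum
    set X := t1 * a + t2 * (a + α * a) + t4 * (α * a) with hX
    set Y := t1 * b + t3 * (b + β * b) + t4 * (β * b) with hY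
    have key : b / (α * a + b) * X + (α * a) / (α * a + b) * Y
        = a * b * (1 + α) / (α * a + b) := by
      rw [hX, hY, div_mul_eq_mul_div, div_mul_eq_mul_div, ← add_div,
        div_eq_div_iff hD.ne' hD.ne']
      linear_combination ((α * a + b) * (a * b * (1 + α))) * hsum +
        ((t3 + t4) * a * b * (α * a + b)) * hαβ
    have hl : 0 ≤ b / (α * a + b) := by positivity
    have hm : 0 ≤ α * a / (α * a + b) := by positivity
    have hsum' : b / (α * a + b) + α * a / (α * a + b) = 1 := by
      field_simp
      ring
    have h5 : min X Y ≤ b / (α * a + b) * X + (α * a) / (α * a + b) * Y := by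
      calc min X Y = b / (α * a + b) * min X Y + α * a / (α * a + b) * min X Y := by
            rw [← add_mul, hsum', one_mul]
        _ ≤ _ := add_le_add (mul_le_mul_of_nonneg_left (min_le_left X Y) hl)
            (mul_le_mul_of_nonneg_left (min_le_right X Y) hm)
    linarith [h5, key.le]
  · have e1 : (0 : ℝ) * a + b / (α * a + b) * (a + α * a) + 0 * (α * a)
        = a * b * (1 + α) / (α * a + b) := by
      field_simp
      ring
    have e2 : (0 : ℝ) * b + a / (a + β * b) * (b + β * b) + 0 * (β * b)
        = a * b * (1 + α) / (α * a + b) := by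
      rw [zero_mul, zero_mul, zero_add, add_zero, div_mul_eq_mul_div,
        div_eq_div_iff hD2.ne' hD.ne']
      linear_combination (a * b * (a - b)) * hαβ
    rw [e1, e2, min_self]
end

section
/- Let a, b, α, β be positive reals with α·β = 1. For every time-sharing vector t = (t1, t2, t3, t4) with ti ≥ 0 and t1 + t2 + t3 + t4 = 1, one has R_C2(t)/a + α·R_C3(t)/b = 1 + α, where R_C2(t) = t1·a + t2·(a + α·a) + t4·α·a and R_C3(t) = t1·b + t3·(b + β·b) + t4·β·b. In particular, any change of time-sharing vector that increases R_C2 strictly decreases R_C3 and vice versa. -/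
/-- For α·β = 1, every time-sharing vector t in the simplex satisfies
R_C2(t)/a + α·R_C3(t)/b = 1 + α; consequently, any change of time-sharing vector that
increases R_C2 strictly decreases R_C3, and vice versa. -/
theorem diamond_cut_rate_tradeoff (a b α β : ℝ)
    (ha : 0 < a) (hb : 0 < b) (hα : 0 < α) (hβ : 0 < β) (hαβ : α * β = 1) :
    (∀ t1 t2 t3 t4 : ℝ, 0 ≤ t1 → 0 ≤ t2 → 0 ≤ t3 → 0 ≤ t4 →
      t1 + t2 + t3 + t4 = 1 →
      (t1 * a + t2 * (a + α * a) + t4 * (α * a)) / a +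
        α * (t1 * b + t3 * (b + β * b) + t4 * (β * b)) / b = 1 + α) ∧
    (∀ t1 t2 t3 t4 s1 s2 s3 s4 : ℝ,
      0 ≤ t1 → 0 ≤ t2 → 0 ≤ t3 → 0 ≤ t4 → t1 + t2 + t3 + t4 = 1 →
      0 ≤ s1 → 0 ≤ s2 → 0 ≤ s3 → 0 ≤ s4 → s1 + s2 + s3 + s4 = 1 →
      ((t1 * a + t2 * (a + α * a) + t4 * (α * a) <
          s1 * a + s2 * (a + α * a) + s4 * (α * a) →
        s1 * b + s3 * (b + β * b) + s4 * (β * b) <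
          t1 * b + t3 * (b + β * b) + t4 * (β * b)) ∧
       (t1 * b + t3 * (b + β * b) + t4 * (β * b) <
          s1 * b + s3 * (b + β * b) + s4 * (β * b) →
        s1 * a + s2 * (a + α * a) + s4 * (α * a) <
          t1 * a + t2 * (a + α * a) + t4 * (α * a)))) := by
  have key : ∀ t1 t2 t3 t4 : ℝ, t1 + t2 + t3 + t4 = 1 →
      (t1 * a + t2 * (a + α * a) + t4 * (α * a)) / a +
        α * (t1 * b + t3 * (b + β * b) + t4 * (β * b)) / b = 1 + α := by
    intro t1 t2 t3 t4 hsum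
    field_simp
    linear_combination (1 + α) * hsum + (t3 + t4) * hαβ
  refine ⟨fun t1 t2 t3 t4 _ _ _ _ h => key t1 t2 t3 t4 h, ?_⟩
  intro t1 t2 t3 t4 s1 s2 s3 s4 _ _ _ _ ht _ _ _ _ hs
  have h1 := key t1 t2 t3 t4 ht
  have h2 := key s1 s2 s3 s4 hs
  have heq : (t1 * a + t2 * (a + α * a) + t4 * (α * a)) * b +
      α * (t1 * b + t3 * (b + β * b) + t4 * (β * b)) * a =
      (s1 * a + s2 * (a + α * a) + s4 * (α * a)) * b +
      α * (s1 * b + s3 * (b + β * b) + s4 * (β * b)) * a := by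
    have h3 : (t1 * a + t2 * (a + α * a) + t4 * (α * a)) / a +
        α * (t1 * b + t3 * (b + β * b) + t4 * (β * b)) / b =
        (s1 * a + s2 * (a + α * a) + s4 * (α * a)) / a +
        α * (s1 * b + s3 * (b + β * b) + s4 * (β * b)) / b := by rw [h1, h2]
    field_simp at h3
    linear_combination a * b * h3
  constructor
  · intro hlt
    have := mul_pos hα ha
    nlinarith [mul_lt_mul_of_pos_right hlt hb]
  · intro hlt
    have := mul_pos hα ha
    nlinarith [mul_lt_mul_of_pos_right hlt this]
end

section
/- Let a, b, α, β be positive reals with α·β = 1, let C012 and C123 be arbitrary real numbers, and let t* = (0, b/(α·a + b), a/(a + β·b), 0). Then all four cut rates at t* are equal: R_C1(t*) = R_C2(t*) = R_C3(t*) = R_C4(t*) = a·b·(1 + α)/(α·a + b), where R_C1(t) = t1·C012 + t2·a + t3·b, R_C2(t) = t1·a + t2·(a + α·a) + t4·α·a, R_C3(t) = t1·b + t3·(b + β·b) + t4·β·b, and R_C4(t) = t2·α·a + t3·β·b + t4·C123. -/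
/-- At t* = (0, b/(α·a + b), a/(a + β·b), 0) with α·β = 1, all four
cut rates are equal to a·b·(1 + α)/(α·a + b), for any values of C012 and C123. -/
theorem diamond_all_cuts_equal_at_tstar (a b α β C012 C123 : ℝ)
    (ha : 0 < a) (hb : 0 < b) (hα : 0 < α) (hβ : 0 < β) (hαβ : α * β = 1) :
    let t1 : ℝ := 0
    let t2 : ℝ := b / (α * a + b)
    let t3 : ℝ := a / (a + β * b)
    let t4 : ℝ := 0
    t1 * C012 + t2 * a + t3 * b = a * b * (1 + α) / (α * a + b) ∧
    t1 * a + t2 * (a + α * a) + t4 * (α * a) = a * b * (1 + α) / (α * a + b) ∧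
    t1 * b + t3 * (b + β * b) + t4 * (β * b) = a * b * (1 + α) / (α * a + b) ∧
    t2 * (α * a) + t3 * (β * b) + t4 * C123 = a * b * (1 + α) / (α * a + b) := by
  have hβ' : β = 1 / α := by field_simp; linarith [hαβ]
  subst hβ'
  have h1 : α * a + b ≠ 0 := by positivity
  have h2 : a + 1 / α * b ≠ 0 := by positivity
  have hα0 : α ≠ 0 := ne_of_gt hα
  refine ⟨?_, ?_, ?_, ?_⟩ <;> field_simp <;> ring
end

section
/- Let a, b, α, β be positive reals with α·β = 1, and let C012 and C123 be reals with C012 ≥ max(a, b) and C123 ≥ max(α·a, β·b). Then the half-duplex cut-set upper bound equals the successive-relaying rate: the supremum, over all time-sharing vectors t = (t1, t2, t3, t4) with ti ≥ 0 and t1 + t2 + t3 + t4 = 1, of min(R_C1(t), R_C2(t), R_C3(t), R_C4(t)) equals a·b·(1 + α)/(α·a + b), and this supremum is attained at t* = (0, b/(α·a + b), a/(a + β·b), 0). Here R_C1(t) = t1·C012 + t2·a + t3·b, R_C2(t) = t1·a + t2·(a + α·a) + t4·α·a, R_C3(t) = t1·b + t3·(b + β·b) + t4·β·b, and R_C4(t)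 = t2·α·a + t3·β·b + t4·C123. -/
/-- Theorem 1, parametrized form: Under α·β = 1, with
C012 ≥ max(a, b) and C123 ≥ max(α·a, β·b), the half-duplex cut-set upper bound
(supremum over the time-sharing simplex of the minimum of the four cut rates)
equals a·b·(1 + α)/(α·a + b), and it is attained at
t* = (0, b/(α·a + b), a/(a + β·b), 0). -/
theorem diamond_cutset_equals_RSR (a b α β C012 C123 : ℝ)
    (ha : 0 < a) (hb : 0 < b) (hα : 0 < α) (hβ : 0 < β) (hαβ : α * β = 1)
    (hC012 : max a b ≤ C012) (hC123 : max (α * a) (β * b) ≤ C123) :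
    IsGreatest
      { r : ℝ | ∃ t1 t2 t3 t4 : ℝ,
          0 ≤ t1 ∧ 0 ≤ t2 ∧ 0 ≤ t3 ∧ 0 ≤ t4 ∧ t1 + t2 + t3 + t4 = 1 ∧
          r = min (min (t1 * C012 + t2 * a + t3 * b)
                       (t1 * a + t2 * (a + α * a) + t4 * (α * a)))
                  (min (t1 * b + t3 * (b + β * b) + t4 * (β * b))
                       (t2 * (α * a) + t3 * (β * b) + t4 * C123)) }
      (a * b * (1 + α) / (α * a + b)) ∧
    min (min ((0:ℝ) * C012 + b / (α * a + b) * a + a / (a + β * b) * b)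
             ((0:ℝ) * a + b / (α * a + b) * (a + α * a) + 0 * (α * a)))
        (min ((0:ℝ) * b + a / (a + β * b) * (b + β * b) + 0 * (β * b))
             (b / (α * a + b) * (α * a) + a / (a + β * b) * (β * b) + 0 * C123)) =
      a * b * (1 + α) / (α * a + b) := by
  have hβeq : β = α⁻¹ := by
    field_simp
    linarith [hαβ]
  subst hβeq
  have hs : 0 < α * a + b := by positivity
  have hs' : 0 < a + α⁻¹ * b := by positivity
  have hαne : α ≠ 0 := ne_of_gt hα
  -- equality of the four rates at t*
  have e1 : (0:ℝ) * C012 + b / (α * a + b) * a + a / (a + α⁻¹ * b) * b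
      = a * b * (1 + α) / (α * a + b) := by
    field_simp
    ring
  have e2 : (0:ℝ) * a + b / (α * a + b) * (a + α * a) + 0 * (α * a)
      = a * b * (1 + α) / (α * a + b) := by
    field_simp
    ring
  have e3 : (0:ℝ) * b + a / (a + α⁻¹ * b) * (b + α⁻¹ * b) + 0 * (α⁻¹ * b)
      = a * b * (1 + α) / (α * a + b) := by
    field_simp
    ring
  have e4 : b / (α * a + b) * (α * a) + a / (a + α⁻¹ * b) * (α⁻¹ * b) + 0 * C123
      = a * b * (1 + α) / (α * a + b) := by
    field_simp
    ring
  have hmin : min (min ((0:ℝ) * C012 + b / (α * a + b) * a + a / (a + α⁻¹ * b) * b)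
             ((0:ℝ) * a + b / (α * a + b) * (a + α * a) + 0 * (α * a)))
        (min ((0:ℝ) * b + a / (a + α⁻¹ * b) * (b + α⁻¹ * b) + 0 * (α⁻¹ * b))
             (b / (α * a + b) * (α * a) + a / (a + α⁻¹ * b) * (α⁻¹ * b) + 0 * C123)) =
      a * b * (1 + α) / (α * a + b) := by
    rw [e1, e2, e3, e4, min_self, min_self]
  refine ⟨⟨⟨0, b / (α * a + b), a / (a + α⁻¹ * b), 0, le_refl 0, by positivity,
      by positivity, le_refl 0, ?_, hmin.symm⟩, ?_⟩, hmin⟩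
  · -- sum to 1
    field_simp
    ring
  · -- upper bound
    rintro r ⟨t1, t2, t3, t4, h1, h2, h3, h4, hsum, hr⟩
    have hr2 : r ≤ t1 * a + t2 * (a + α * a) + t4 * (α * a) := by
      rw [hr]; exact le_trans (min_le_left _ _) (min_le_right _ _)
    have hr3 : r ≤ t1 * b + t3 * (b + α⁻¹ * b) + t4 * (α⁻¹ * b) := by
      rw [hr]; exact le_trans (min_le_right _ _) (min_le_left _ _)
    have key : b * (t1 * a + t2 * (a + α * a) + t4 * (α * a))
        + (α * a) * (t1 * b + t3 * (b + α⁻¹ * b) + t4 * (α⁻¹ * b))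
        = a * b * (1 + α) := by
      have : b * (t1 * a + t2 * (a + α * a) + t4 * (α * a))
          + (α * a) * (t1 * b + t3 * (b + α⁻¹ * b) + t4 * (α⁻¹ * b))
          = a * b * (1 + α) * (t1 + t2 + t3 + t4) := by
        field_simp
        ring
      rw [this, hsum, mul_one]
    rw [le_div_iff₀ hs]
    nlinarith [mul_le_mul_of_nonneg_left hr2 hb.le,
      mul_le_mul_of_nonneg_left hr3 (by positivity : (0:ℝ) ≤ α * a)]
end

section
/- Let g01, g02, g13, g23, PS, PR1, PR2, σ1², σ2², σ3² be positive reals, and define C01 = log₂(1 + g01·PS/σ1²), C02 = log₂(1 + g02·PS/σ2²), C13 = log₂(1 + g13·PR1/σ3²), C23 = log₂(1 + g23·PR2/σ3²), C012 = log₂(1 + (g01/σ1² + g02/σ2²)·PS), and C123 = log₂(1 + (√(g13·PR1) + √(g23·PR2))²/σ3²). If C01·C02 = C13·C23, then the supremum, over all time-sharing vectors t = (t1, t2, t3, t4) with ti ≥ 0 and t1 + t2 + t3 + t4 = 1, of min(t1·C012 + t2·C02 + t3·C01, t1·C02 + t2·(C02 + C13) + t4·C13, t1·C01 + t3·(C01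 + C23) + t4·C23, t2·C13 + t3·C23 + t4·C123) equals the successive-relaying rate R_SR = max(R1, R2), where R1 = (C01·C13 + min(C13·C23, C01·C02))/(C13 + C01) and R2 = (C02·C23 + min(C13·C23, C01·C02))/(C23 + C02). -/
open Real

/-- Theorem 1, Gaussian form: In the Gaussian diamond relay channel,
if C01·C02 = C13·C23 then the half-duplex cut-set upper bound equals the
successive-relaying rate R_SR = max(R1, R2). -/
theorem gaussian_diamond_capacity (g01 g02 g13 g23 PS PR1 PR2 σ1 σ2 σ3 : ℝ)
    (hg01 : 0 < g01) (hg02 : 0 < g02) (hg13 : 0 < g13) (hg23 : 0 < g23)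
    (hPS : 0 < PS) (hPR1 : 0 < PR1) (hPR2 : 0 < PR2)
    (hσ1 : 0 < σ1) (hσ2 : 0 < σ2) (hσ3 : 0 < σ3) :
    let C01 := Real.logb 2 (1 + g01 * PS / σ1)
    let C02 := Real.logb 2 (1 + g02 * PS / σ2)
    let C13 := Real.logb 2 (1 + g13 * PR1 / σ3)
    let C23 := Real.logb 2 (1 + g23 * PR2 / σ3)
    let C012 := Real.logb 2 (1 + (g01 / σ1 + g02 / σ2) * PS)
    let C123 := Real.logb 2 (1 + (Real.sqrt (g13 * PR1) + Real.sqrt (g23 * PR2)) ^ 2 / σ3)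
    C01 * C02 = C13 * C23 →
    IsLUB
      { r : ℝ | ∃ t1 t2 t3 t4 : ℝ,
          0 ≤ t1 ∧ 0 ≤ t2 ∧ 0 ≤ t3 ∧ 0 ≤ t4 ∧ t1 + t2 + t3 + t4 = 1 ∧
          r = min (min (t1 * C012 + t2 * C02 + t3 * C01)
                       (t1 * C02 + t2 * (C02 + C13) + t4 * C13))
                  (min (t1 * C01 + t3 * (C01 + C23) + t4 * C23)
                       (t2 * C13 + t3 * C23 + t4 * C123)) }
      (max ((C01 * C13 + min (C13 * C23) (C01 * C02)) / (C13 + C01))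
           ((C02 * C23 + min (C13 * C23) (C01 * C02)) / (C23 + C02))) := by
  intro C01 C02 C13 C23 C012 C123 h
  have hC01 : 0 < C01 := Real.logb_pos one_lt_two
    (by nlinarith [div_pos (mul_pos hg01 hPS) hσ1])
  have hC02 : 0 < C02 := Real.logb_pos one_lt_two
    (by nlinarith [div_pos (mul_pos hg02 hPS) hσ2])
  have hC13 : 0 < C13 := Real.logb_pos one_lt_two
    (by nlinarith [div_pos (mul_pos hg13 hPR1) hσ3])
  have hC23 : 0 < C23 := Real.logb_pos one_lt_two
    (by nlinarith [div_pos (mul_pos hg23 hPR2) hσ3])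
  have hmin : min (C13 * C23) (C01 * C02) = C13 * C23 := min_eq_left h.ge
  constructor
  · rintro r ⟨t1, t2, t3, t4, h1, h2, h3, h4, hsum, rfl⟩
    refine le_trans ?_ (le_max_left _ _)
    rw [hmin, le_div_iff₀ (by linarith : (0:ℝ) < C13 + C01)]
    have hw2 : min (min (t1 * C012 + t2 * C02 + t3 * C01)
                       (t1 * C02 + t2 * (C02 + C13) + t4 * C13))
                  (min (t1 * C01 + t3 * (C01 + C23) + t4 * C23)
                       (t2 * C13 + t3 * C23 + t4 * C123))
        ≤ t1 * C02 + t2 * (C02 + C13) + t4 * C13 :=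
      le_trans (min_le_left _ _) (min_le_right _ _)
    have hw3 : min (min (t1 * C012 + t2 * C02 + t3 * C01)
                       (t1 * C02 + t2 * (C02 + C13) + t4 * C13))
                  (min (t1 * C01 + t3 * (C01 + C23) + t4 * C23)
                       (t2 * C13 + t3 * C23 + t4 * C123))
        ≤ t1 * C01 + t3 * (C01 + C23) + t4 * C23 :=
      le_trans (min_le_right _ _) (min_le_left _ _)
    have key : C01 * (t1 * C02 + t2 * (C02 + C13) + t4 * C13)
        + C13 * (t1 * C01 + t3 * (C01 + C23) + t4 * C23)
        = C01 * C13 + C13 * C23 := by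
      linear_combination (C01 * C13 + C13 * C23) * hsum + (t1 + t2) * h
    nlinarith [mul_le_mul_of_nonneg_left hw2 hC01.le,
      mul_le_mul_of_nonneg_left hw3 hC13.le]
  · intro b hb
    apply hb
    rcases le_total ((C01 * C13 + min (C13 * C23) (C01 * C02)) / (C13 + C01))
        ((C02 * C23 + min (C13 * C23) (C01 * C02)) / (C23 + C02)) with hle | hle
    · have hD : (0:ℝ) < C02 + C23 := by linarith
      refine ⟨0, C23 / (C02 + C23), C02 / (C02 + C23), 0, le_refl 0,
        (div_pos hC23 hD).le, (div_pos hC02 hD).le, le_refl 0, by field_simp; ring, ?_⟩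
      rw [max_eq_right hle, hmin]
      have e1 : 0 * C012 + C23 / (C02 + C23) * C02 + C02 / (C02 + C23) * C01
          = (C02 * C23 + C13 * C23) / (C23 + C02) := by
        field_simp
        linear_combination (C02 + C23) * h
      have e2 : 0 * C02 + C23 / (C02 + C23) * (C02 + C13) + 0 * C13
          = (C02 * C23 + C13 * C23) / (C23 + C02) := by
        field_simp
        ring
      have e3 : 0 * C01 + C02 / (C02 + C23) * (C01 + C23) + 0 * C23
          = (C02 * C23 + C13 * C23) / (C23 + C02) := by
        field_simp
        linear_combination (C02 + C23) * h
      have e4 : C23 / (C02 + C23) * C13 + C02 / (C02 + C23) * C23 + 0 * C123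
          = (C02 * C23 + C13 * C23) / (C23 + C02) := by
        field_simp
        ring
      rw [e1, e2, e3, e4, min_self, min_self]
    · have hD : (0:ℝ) < C01 + C13 := by linarith
      refine ⟨0, C01 / (C01 + C13), C13 / (C01 + C13), 0, le_refl 0,
        (div_pos hC01 hD).le, (div_pos hC13 hD).le, le_refl 0, by field_simp; ring, ?_⟩
      rw [max_eq_left hle, hmin]
      have e1 : 0 * C012 + C01 / (C01 + C13) * C02 + C13 / (C01 + C13) * C01
          = (C01 * C13 + C13 * C23) / (C13 + C01) := by
        field_simp
        linear_combination (C01 + C13) * h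
      have e2 : 0 * C02 + C01 / (C01 + C13) * (C02 + C13) + 0 * C13
          = (C01 * C13 + C13 * C23) / (C13 + C01) := by
        field_simp
        linear_combination (C01 + C13) * h
      have e3 : 0 * C01 + C13 / (C01 + C13) * (C01 + C23) + 0 * C23
          = (C01 * C13 + C13 * C23) / (C13 + C01) := by
        field_simp
        ring
      have e4 : C01 / (C01 + C13) * C13 + C13 / (C01 + C13) * C23 + 0 * C123
          = (C01 * C13 + C13 * C23) / (C13 + C01) := by
        rw [div_mul_eq_mul_div, div_mul_eq_mul_div, ← add_div, add_comm C13 C01]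
        ring
      rw [e1, e2, e3, e4, min_self, min_self]
end
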